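/- Given a quasi-stationary distribution μ of P_I, define π by π(ε) = ∑_{i∈I} μ(i)P(i,ε) for ε ∈ ℰ and π(i) = γ μ(i) for i ∈ I, and define the stochastic matrix P^π on I ∪ ℰ by P^π(i,b) = P(i,b) for i ∈ I and P^π(ε,b) = π(b) for ε ∈ ℰ. Then π is a stationary distribution of P^π, i.e. πᵀ P^π = πᵀ. -/
import Mathlib


open Finset Matrix

/-- With π(ε) = ∑_i μ(i)P(i,ε), π(i) = γμ(i) and the matrix P^π equal to P
on rows of I and with each row of ℰ equal to π, the distribution π is stationary for P^π:
πᵀ P^π = πᵀ. -/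
theorem pi_stationary_for_Ppi {I E : Type*} [Fintype I] [Fintype E]
    [DecidableEq I] [DecidableEq E] [Nonempty I] [Nonempty E]
    (P : Matrix (I ⊕ E) (I ⊕ E) ℝ)
    (PI : Matrix I I ℝ) (hPI : PI = P.submatrix Sum.inl Sum.inl)
    (hP0 : ∀ a b, 0 ≤ P a b)
    (hP1 : ∀ a, ∑ b, P a b = 1)
    (habs : ∀ (ε : E) (b : I ⊕ E), P (Sum.inr ε) b = if b = Sum.inr ε then 1 else 0)
    (hirr : ∀ i j : I, ∃ n : ℕ, 0 < (PI ^ n) i j)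
    (hsub : 0 < ∑ i : I, ∑ ε : E, P (Sum.inl i) (Sum.inr ε))
    (μ : I → ℝ) (hμ0 : ∀ i, 0 ≤ μ i) (hμ1 : ∑ i, μ i = 1)
    (γ : ℝ) (hγdef : γ = ∑ i : I, ∑ j : I, μ i * P (Sum.inl i) (Sum.inl j))
    (hγ : 0 < γ ∧ γ < 1)
    (hqsd : μ ᵥ* PI = γ • μ)
    (π : I ⊕ E → ℝ)
    (hπI : ∀ i : I, π (Sum.inl i) = γ * μ i)
    (hπE : ∀ ε : E, π (Sum.inr ε) = ∑ i : I, μ i * P (Sum.inl i) (Sum.inr ε))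
    (Pπ : Matrix (I ⊕ E) (I ⊕ E) ℝ)
    (hPπI : ∀ (i : I) (b : I ⊕ E), Pπ (Sum.inl i) b = P (Sum.inl i) b)
    (hPπE : ∀ (ε : E) (b : I ⊕ E), Pπ (Sum.inr ε) b = π b) :
    π ᵥ* Pπ = π := by
  -- total mass on E is 1 - γ
  have hS : ∑ ε : E, π (Sum.inr ε) = 1 - γ := by
    have h1 : ∑ ε : E, π (Sum.inr ε)
        = ∑ i : I, μ i * ∑ ε : E, P (Sum.inl i) (Sum.inr ε) := by
      simp only [hπE, Finset.mul_sum]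
      rw [Finset.sum_comm]
    have h2 : ∀ i : I, ∑ ε : E, P (Sum.inl i) (Sum.inr ε)
        = 1 - ∑ j : I, P (Sum.inl i) (Sum.inl j) := by
      intro i
      have := hP1 (Sum.inl i)
      rw [Fintype.sum_sum_type] at this
      linarith
    rw [h1]
    have hγ' : γ = ∑ i : I, μ i * ∑ j : I, P (Sum.inl i) (Sum.inl j) := by
      rw [hγdef]; simp [Finset.mul_sum]
    calc ∑ i : I, μ i * (∑ ε : E, P (Sum.inl i) (Sum.inr ε))
        = ∑ i : I, (μ i - μ i * ∑ j : I, P (Sum.inl i) (Sum.inl j)) := by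
          apply Finset.sum_congr rfl; intro i _; rw [h2 i]; ring
      _ = 1 - γ := by rw [Finset.sum_sub_distrib, hμ1, hγ']
  have hqsd' : ∀ j : I, ∑ i : I, μ i * P (Sum.inl i) (Sum.inl j) = γ * μ j := by
    intro j
    have := congrFun hqsd j
    simpa [Matrix.vecMul, dotProduct, hPI] using this
  funext b
  have key : (π ᵥ* Pπ) b
      = ∑ i : I, (γ * μ i) * P (Sum.inl i) b + (1 - γ) * π b := by
    simp only [Matrix.vecMul, dotProduct, Fintype.sum_sum_type]
    congr 1
    · apply Finset.sum_congr rfl; intro i _; rw [hπI, hPπI]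
    · calc ∑ ε : E, π (Sum.inr ε) * Pπ (Sum.inr ε) b
          = (∑ ε : E, π (Sum.inr ε)) * π b := by
            rw [Finset.sum_mul]
            apply Finset.sum_congr rfl; intro ε _; rw [hPπE]
        _ = (1 - γ) * π b := by rw [hS]
  rw [key]
  cases b with
  | inl j =>
      rw [hπI]
      have : ∑ i : I, (γ * μ i) * P (Sum.inl i) (Sum.inl j)
          = γ * ∑ i : I, μ i * P (Sum.inl i) (Sum.inl j) := by
        rw [Finset.mul_sum]; apply Finset.sum_congr rfl; intro i _; ring
      rw [this, hqsd' j]; ring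
  | inr ε =>
      rw [hπE]
      have : ∑ i : I, (γ * μ i) * P (Sum.inl i) (Sum.inr ε)
          = γ * ∑ i : I, μ i * P (Sum.inl i) (Sum.inr ε) := by
        rw [Finset.mul_sum]; apply Finset.sum_congr rfl; intro i _; ring
      rw [this]; ring
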